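/- Let G₁ and G₂ be nonempty graphs and let D_s and D_t be dominating multisets of the join G₁ + G₂ with |D_s| = |D_t| = k ≥ 3. Then D_s can be reconfigured into D_t by token sliding through dominating multisets of size k. -/

import Mathlib

def MDominates {V : Type*} (G : SimpleGraph V) (D : Multiset V) : Prop :=
  ∀ v : V, ∃ d ∈ D, d = v ∨ G.Adj d v

/-- One token-sliding step between dominating multisets: slide one token along an edge. -/
def TSStep {V : Type*} [DecidableEq V] (G : SimpleGraph V) (D D' : Multiset V) : Prop :=
  MDominates G D ∧ MDominates G D' ∧
    ∃ u v : V, G.Adj u v ∧ u ∈ D ∧ D' = v ::ₘ D.erase u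

/-- The join of two graphs: disjoint union plus all edges between the parts. -/
def joinGraph {V₁ V₂ : Type*} (G₁ : SimpleGraph V₁) (G₂ : SimpleGraph V₂) :
    SimpleGraph (V₁ ⊕ V₂) where
  Adj x y :=
    match x, y with
    | Sum.inl a, Sum.inl b => G₁.Adj a b
    | Sum.inr a, Sum.inr b => G₂.Adj a b
    | Sum.inl _, Sum.inr _ => True
    | Sum.inr _, Sum.inl _ => True
  symm := ⟨by rintro (a | a) (b | b) h <;> simp_all <;> exact h.symm⟩
  loopless := ⟨by rintro (a | a) h <;> simp_all⟩

section Aux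

variable {V₁ V₂ : Type*} [DecidableEq V₁] [DecidableEq V₂]
  {G₁ : SimpleGraph V₁} {G₂ : SimpleGraph V₂}

lemma adj_lr (a : V₁) (b : V₂) : (joinGraph G₁ G₂).Adj (Sum.inl a) (Sum.inr b) :=
  trivial

lemma adj_rl (b : V₂) (a : V₁) : (joinGraph G₁ G₂).Adj (Sum.inr b) (Sum.inl a) :=
  trivial

lemma mixed_dom {D : Multiset (V₁ ⊕ V₂)} (ha : ∃ a, Sum.inl a ∈ D)
    (hb : ∃ b, Sum.inr b ∈ D) : MDominates (joinGraph G₁ G₂) D := by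
  obtain ⟨a, ha⟩ := ha
  obtain ⟨b, hb⟩ := hb
  rintro (x | y)
  · exact ⟨Sum.inr b, hb, Or.inr (adj_rl b x)⟩
  · exact ⟨Sum.inl a, ha, Or.inr (adj_lr a y)⟩

lemma mkStep {D : Multiset (V₁ ⊕ V₂)} {u v : V₁ ⊕ V₂}
    (h : (joinGraph G₁ G₂).Adj u v) (hu : u ∈ D)
    (h1 : MDominates (joinGraph G₁ G₂) D)
    (h2 : MDominates (joinGraph G₁ G₂) (v ::ₘ D.erase u)) :
    TSStep (joinGraph G₁ G₂) D (v ::ₘ D.erase u) :=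
  ⟨h1, h2, u, v, h, hu, rfl⟩

lemma TSStep.symm' {V : Type*} [DecidableEq V] {G : SimpleGraph V}
    {D D' : Multiset V} (h : TSStep G D D') : TSStep G D' D := by
  obtain ⟨h1, h2, u, v, hadj, hu, hEq⟩ := h
  refine ⟨h2, h1, v, u, hadj.symm, ?_, ?_⟩
  · rw [hEq]; exact Multiset.mem_cons_self _ _
  · rw [hEq, Multiset.erase_cons_head, Multiset.cons_erase hu]

/-- head survives erasing something that's in the tail -/
lemma mem_erase_cons {α : Type*} [DecidableEq α] {x u : α} {t : Multiset α}
    (hu : u ∈ t) : x ∈ (x ::ₘ t).erase u := by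
  by_cases h : u = x
  · subst h; rw [Multiset.erase_cons_head]; exact hu
  · rw [Multiset.erase_cons_tail _ (fun hx => h hx.symm)]
    exact Multiset.mem_cons_self _ _

lemma card_move {α : Type*} [DecidableEq α] {u : α} (v : α) {D : Multiset α}
    (hu : u ∈ D) : Multiset.card (v ::ₘ D.erase u) = Multiset.card D := by
  rw [Multiset.card_cons, Multiset.card_erase_of_mem hu]
  exact Nat.succ_pred_eq_of_pos (Multiset.card_pos_iff_exists_mem.2 ⟨u, hu⟩)

end Aux

section Main

variable {V₁ V₂ : Type*} [DecidableEq V₁] [DecidableEq V₂]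
  (G₁ : SimpleGraph V₁) (G₂ : SimpleGraph V₂) (a₀ : V₁) (b₀ : V₂)

/-- From a good configuration (contains `inl a₀` and `inr b₀`), reach the canonical one. -/
lemma good_to_C (k : ℕ) (hk : 3 ≤ k) :
    ∀ n (D : Multiset (V₁ ⊕ V₂)), Multiset.card D = k →
      Sum.inl a₀ ∈ D → Sum.inr b₀ ∈ D →
      Multiset.card (D.filter (· ≠ Sum.inl a₀)) ≤ n →
      Relation.ReflTransGen (TSStep (joinGraph G₁ G₂)) D
        (Sum.inr b₀ ::ₘ Multiset.replicate (k - 1) (Sum.inl a₀)) := by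
  intro n
  induction n with
  | zero =>
    intro D _ _ hb hle
    have hpos : 0 < Multiset.card (D.filter (· ≠ Sum.inl a₀)) :=
      Multiset.card_pos_iff_exists_mem.2 ⟨_, Multiset.mem_filter.2 ⟨hb, Sum.inr_ne_inl⟩⟩
    omega
  | succ n ih =>
    intro D hcard ha hb hle
    have hbf : Sum.inr b₀ ∈ D.filter (· ≠ Sum.inl a₀) :=
      Multiset.mem_filter.2 ⟨hb, Sum.inr_ne_inl⟩
    rcases Nat.lt_or_ge (Multiset.card (D.filter (· ≠ Sum.inl a₀))) 2 with h2 | h2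
    · -- card filter = 1, so D is already canonical
      have h1 : Multiset.card (D.filter (· ≠ Sum.inl a₀)) = 1 := by
        have := Multiset.card_pos_iff_exists_mem.2 ⟨_, hbf⟩; omega
      obtain ⟨x, hx⟩ := Multiset.card_eq_one.1 h1
      have hxb : x = Sum.inr b₀ := by
        have := hbf; rw [hx, Multiset.mem_singleton] at this; exact this.symm
      have hD : D = Sum.inr b₀ ::ₘ Multiset.replicate (k - 1) (Sum.inl a₀) := by
        have hsplit := Multiset.filter_add_not (· ≠ Sum.inl a₀) D
        have hnot : D.filter (fun a => ¬ a ≠ Sum.inl a₀) = D.filter (· = Sum.inl a₀) := by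
          apply Multiset.filter_congr; intro x _; simp
        have heq' : D.filter (· = Sum.inl a₀)
            = Multiset.replicate (Multiset.count (Sum.inl a₀) D) (Sum.inl a₀) :=
          Multiset.filter_eq' _ _
        have hcount : Multiset.count (Sum.inl a₀) D = k - 1 := by
          have hc := congrArg Multiset.card hsplit
          rw [Multiset.card_add, h1, hnot, heq', Multiset.card_replicate, hcard] at hc
          omega
        calc D = D.filter (· ≠ Sum.inl a₀) + D.filter (fun a => ¬ a ≠ Sum.inl a₀) :=
              hsplit.symm
          _ = {x} + Multiset.replicate (k - 1) (Sum.inl a₀) := by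
                rw [hx, hnot, heq', hcount]
          _ = Sum.inr b₀ ::ₘ Multiset.replicate (k - 1) (Sum.inl a₀) := by
                rw [hxb, Multiset.singleton_add]
      rw [hD]
    · -- find a token to move
      obtain ⟨u, hu⟩ : ∃ u, u ∈ (D.filter (· ≠ Sum.inl a₀)).erase (Sum.inr b₀) := by
        apply Multiset.card_pos_iff_exists_mem.1
        simp only [Multiset.card_erase_of_mem hbf, Nat.pred_eq_sub_one]; omega
      have huf : u ∈ D.filter (· ≠ Sum.inl a₀) := Multiset.mem_of_mem_erase hu
      have huD : u ∈ D := Multiset.mem_of_mem_filter huf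
      have hup : u ≠ Sum.inl a₀ := (Multiset.mem_filter.1 huf).2
      have haE : Sum.inl a₀ ∈ D.erase u :=
        (Multiset.mem_erase_of_ne (fun h => hup h.symm)).2 ha
      have hbE : Sum.inr b₀ ∈ D.erase u := by
        by_cases hub : u = Sum.inr b₀
        · subst hub
          have h2le : 2 ≤ Multiset.count (Sum.inr b₀) (D.filter (· ≠ Sum.inl a₀)) := by
            have := Multiset.count_pos.2 hu
            rw [Multiset.count_erase_self] at this; omega
          have h2D : 2 ≤ Multiset.count (Sum.inr b₀) D :=
            le_trans h2le (Multiset.count_le_of_le _ (Multiset.filter_le _ _))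
          rw [← Multiset.count_pos, Multiset.count_erase_self]; omega
        · exact (Multiset.mem_erase_of_ne (fun h => hub h.symm)).2 hb
      -- target of this round
      set D₂ : Multiset (V₁ ⊕ V₂) := Sum.inl a₀ ::ₘ D.erase u with hD₂
      have hdomD : MDominates (joinGraph G₁ G₂) D := mixed_dom ⟨a₀, ha⟩ ⟨b₀, hb⟩
      have hdomD₂ : MDominates (joinGraph G₁ G₂) D₂ :=
        mixed_dom ⟨a₀, Multiset.mem_cons_self _ _⟩
          ⟨b₀, Multiset.mem_cons_of_mem hbE⟩
      have hsteps : Relation.ReflTransGen (TSStep (joinGraph G₁ G₂)) D D₂ := by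
        rcases u with a | c
        · -- two steps via inr b₀
          set B : Multiset (V₁ ⊕ V₂) := Sum.inr b₀ ::ₘ D.erase (Sum.inl a) with hB
          have hdomB : MDominates (joinGraph G₁ G₂) B :=
            mixed_dom ⟨a₀, Multiset.mem_cons_of_mem haE⟩
              ⟨b₀, Multiset.mem_cons_self _ _⟩
          have s1 : TSStep (joinGraph G₁ G₂) D B :=
            mkStep (adj_lr a b₀) huD hdomD hdomB
          have s2 : TSStep (joinGraph G₁ G₂) B D₂ := by
            have hBe : D₂ = Sum.inl a₀ ::ₘ B.erase (Sum.inr b₀) := by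
              rw [hB, Multiset.erase_cons_head]
            rw [hBe]
            exact mkStep (adj_rl b₀ a₀) (Multiset.mem_cons_self _ _) hdomB
              (by rw [← hBe]; exact hdomD₂)
          exact (Relation.ReflTransGen.single s1).tail s2
        · exact Relation.ReflTransGen.single
            (mkStep (adj_rl c a₀) huD hdomD hdomD₂)
      refine hsteps.trans (ih D₂ ?_ (Multiset.mem_cons_self _ _)
        (Multiset.mem_cons_of_mem hbE) ?_)
      · rw [hD₂, card_move _ huD, hcard]
      · have hfilt : D₂.filter (· ≠ Sum.inl a₀) = (D.erase u).filter (· ≠ Sum.inl a₀) := by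
          rw [hD₂, Multiset.filter_cons_of_neg]
          simp
        have hsum : Multiset.card (D.filter (· ≠ Sum.inl a₀))
            = Multiset.card ((D.erase u).filter (· ≠ Sum.inl a₀)) + 1 := by
          conv_lhs => rw [← Multiset.cons_erase huD]
          rw [Multiset.filter_cons_of_pos (p := fun x => x ≠ Sum.inl a₀) _ hup,
            Multiset.card_cons]
        rw [hfilt]; omega

/-- Make the configuration good when there are two `inr` tokens and an `inl` token. -/
lemma case_two_r {D : Multiset (V₁ ⊕ V₂)} (hdom : MDominates (joinGraph G₁ G₂) D)
    {w w' : V₂} {a : V₁} (hw : Sum.inr w ∈ D) (hw' : Sum.inr w' ∈ D.erase (Sum.inr w))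
    (ha : Sum.inl a ∈ D) :
    ∃ E : Multiset (V₁ ⊕ V₂),
      Relation.ReflTransGen (TSStep (joinGraph G₁ G₂)) D E ∧
      Multiset.card E = Multiset.card D ∧ Sum.inl a₀ ∈ E ∧ Sum.inr b₀ ∈ E := by
  set D₁ : Multiset (V₁ ⊕ V₂) := Sum.inl a₀ ::ₘ D.erase (Sum.inr w) with hD₁
  have hdom₁ : MDominates (joinGraph G₁ G₂) D₁ :=
    mixed_dom ⟨a₀, Multiset.mem_cons_self _ _⟩ ⟨w', Multiset.mem_cons_of_mem hw'⟩
  have s1 : TSStep (joinGraph G₁ G₂) D D₁ := mkStep (adj_rl w a₀) hw hdom hdom₁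
  have haD₁ : Sum.inl a ∈ D.erase (Sum.inr w) :=
    (Multiset.mem_erase_of_ne Sum.inl_ne_inr).2 ha
  set D₂ : Multiset (V₁ ⊕ V₂) := Sum.inr b₀ ::ₘ D₁.erase (Sum.inl a) with hD₂
  have ha₀ : Sum.inl a₀ ∈ D₁.erase (Sum.inl a) := mem_erase_cons haD₁
  have hdom₂ : MDominates (joinGraph G₁ G₂) D₂ :=
    mixed_dom ⟨a₀, Multiset.mem_cons_of_mem ha₀⟩ ⟨b₀, Multiset.mem_cons_self _ _⟩
  have s2 : TSStep (joinGraph G₁ G₂) D₁ D₂ :=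
    mkStep (adj_lr a b₀) (Multiset.mem_cons_of_mem haD₁) hdom₁ hdom₂
  refine ⟨D₂, (Relation.ReflTransGen.single s1).tail s2, ?_,
    Multiset.mem_cons_of_mem ha₀, Multiset.mem_cons_self _ _⟩
  rw [hD₂, card_move _ (Multiset.mem_cons_of_mem haD₁)]
  exact card_move _ hw

/-- Make the configuration good when there are two `inl` tokens and an `inr` token. -/
lemma case_two_l {D : Multiset (V₁ ⊕ V₂)} (hdom : MDominates (joinGraph G₁ G₂) D)
    {z z' : V₁} {y : V₂} (hz : Sum.inl z ∈ D) (hz' : Sum.inl z' ∈ D.erase (Sum.inl z))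
    (hy : Sum.inr y ∈ D) :
    ∃ E : Multiset (V₁ ⊕ V₂),
      Relation.ReflTransGen (TSStep (joinGraph G₁ G₂)) D E ∧
      Multiset.card E = Multiset.card D ∧ Sum.inl a₀ ∈ E ∧ Sum.inr b₀ ∈ E := by
  set D₁ : Multiset (V₁ ⊕ V₂) := Sum.inr b₀ ::ₘ D.erase (Sum.inl z) with hD₁
  have hdom₁ : MDominates (joinGraph G₁ G₂) D₁ :=
    mixed_dom ⟨z', Multiset.mem_cons_of_mem hz'⟩ ⟨b₀, Multiset.mem_cons_self _ _⟩
  have s1 : TSStep (joinGraph G₁ G₂) D D₁ := mkStep (adj_lr z b₀) hz hdom hdom₁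
  have hyD₁ : Sum.inr y ∈ D.erase (Sum.inl z) :=
    (Multiset.mem_erase_of_ne Sum.inr_ne_inl).2 hy
  set D₂ : Multiset (V₁ ⊕ V₂) := Sum.inl a₀ ::ₘ D₁.erase (Sum.inr y) with hD₂
  have hb₀ : Sum.inr b₀ ∈ D₁.erase (Sum.inr y) := mem_erase_cons hyD₁
  have hdom₂ : MDominates (joinGraph G₁ G₂) D₂ :=
    mixed_dom ⟨a₀, Multiset.mem_cons_self _ _⟩ ⟨b₀, Multiset.mem_cons_of_mem hb₀⟩
  have s2 : TSStep (joinGraph G₁ G₂) D₁ D₂ :=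
    mkStep (adj_rl y a₀) (Multiset.mem_cons_of_mem hyD₁) hdom₁ hdom₂
  refine ⟨D₂, (Relation.ReflTransGen.single s1).tail s2, ?_,
    Multiset.mem_cons_self _ _, Multiset.mem_cons_of_mem hb₀⟩
  rw [hD₂, card_move _ (Multiset.mem_cons_of_mem hyD₁)]
  exact card_move _ hz

/-- Reach a good configuration from an arbitrary dominating one. -/
lemma to_good (k : ℕ) (hk : 3 ≤ k) (D : Multiset (V₁ ⊕ V₂))
    (hdom : MDominates (joinGraph G₁ G₂) D) (hcard : Multiset.card D = k) :
    ∃ E : Multiset (V₁ ⊕ V₂),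
      Relation.ReflTransGen (TSStep (joinGraph G₁ G₂)) D E ∧
      Multiset.card E = k ∧ Sum.inl a₀ ∈ E ∧ Sum.inr b₀ ∈ E := by
  by_cases hA : ∃ a, Sum.inl a ∈ D
  · obtain ⟨a, ha⟩ := hA
    by_cases hB : ∃ b, Sum.inr b ∈ D
    · -- mixed configuration
      obtain ⟨b, hb⟩ := hB
      have hbe : Sum.inr b ∈ D.erase (Sum.inl a) :=
        (Multiset.mem_erase_of_ne Sum.inr_ne_inl).2 hb
      obtain ⟨t, ht⟩ : ∃ t, t ∈ (D.erase (Sum.inl a)).erase (Sum.inr b) := by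
        apply Multiset.card_pos_iff_exists_mem.1
        simp only [Multiset.card_erase_of_mem hbe, Multiset.card_erase_of_mem ha,
          Nat.pred_eq_sub_one, hcard]
        omega
      rcases t with z' | w'
      · obtain ⟨E, hE, hEc, h1, h2⟩ := case_two_l G₁ G₂ a₀ b₀ hdom ha
          (Multiset.mem_of_mem_erase ht) hb
        exact ⟨E, hE, by rw [hEc, hcard], h1, h2⟩
      · rw [Multiset.erase_comm] at ht
        obtain ⟨E, hE, hEc, h1, h2⟩ := case_two_r G₁ G₂ a₀ b₀ hdom hb
          (Multiset.mem_of_mem_erase ht) ha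
        exact ⟨E, hE, by rw [hEc, hcard], h1, h2⟩
    · -- all tokens on the left
      set D₁ : Multiset (V₁ ⊕ V₂) := Sum.inr b₀ ::ₘ D.erase (Sum.inl a) with hD₁
      obtain ⟨z, hz⟩ : ∃ z, z ∈ D.erase (Sum.inl a) := by
        apply Multiset.card_pos_iff_exists_mem.1
        simp only [Multiset.card_erase_of_mem ha, Nat.pred_eq_sub_one, hcard]
        omega
      obtain ⟨z₁, rfl⟩ : ∃ z₁, z = Sum.inl z₁ := by
        rcases z with z₁ | z₂
        · exact ⟨z₁, rfl⟩
        · exact absurd ⟨z₂, Multiset.mem_of_mem_erase hz⟩ hB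
      have hdom₁ : MDominates (joinGraph G₁ G₂) D₁ :=
        mixed_dom ⟨z₁, Multiset.mem_cons_of_mem hz⟩ ⟨b₀, Multiset.mem_cons_self _ _⟩
      have s1 : TSStep (joinGraph G₁ G₂) D D₁ := mkStep (adj_lr a b₀) ha hdom hdom₁
      obtain ⟨t, ht⟩ : ∃ t, t ∈ (D.erase (Sum.inl a)).erase (Sum.inl z₁) := by
        apply Multiset.card_pos_iff_exists_mem.1
        simp only [Multiset.card_erase_of_mem hz, Multiset.card_erase_of_mem ha,
          Nat.pred_eq_sub_one, hcard]
        omega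
      obtain ⟨z₂, rfl⟩ : ∃ z₂, t = Sum.inl z₂ := by
        rcases t with z₂ | z₃
        · exact ⟨z₂, rfl⟩
        · exact absurd ⟨z₃, Multiset.mem_of_mem_erase (Multiset.mem_of_mem_erase ht)⟩ hB
      have hz₂ : Sum.inl z₂ ∈ D₁.erase (Sum.inl z₁) := by
        rw [hD₁, Multiset.erase_cons_tail _ Sum.inr_ne_inl]
        exact Multiset.mem_cons_of_mem ht
      obtain ⟨E, hE, hEc, h1', h2'⟩ := case_two_l G₁ G₂ a₀ b₀ hdom₁
        (Multiset.mem_cons_of_mem hz) hz₂ (Multiset.mem_cons_self _ _)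
      refine ⟨E, (Relation.ReflTransGen.single s1).trans hE, ?_, h1', h2'⟩
      rw [hEc, hD₁, card_move _ ha, hcard]
  · -- all tokens on the right
    obtain ⟨b, hb⟩ : ∃ b, Sum.inr b ∈ D := by
      obtain ⟨u, hu⟩ : ∃ u, u ∈ D := by
        apply Multiset.card_pos_iff_exists_mem.1; omega
      rcases u with a | b
      · exact absurd ⟨a, hu⟩ hA
      · exact ⟨b, hu⟩
    set D₁ : Multiset (V₁ ⊕ V₂) := Sum.inl a₀ ::ₘ D.erase (Sum.inr b) with hD₁
    obtain ⟨z, hz⟩ : ∃ z, z ∈ D.erase (Sum.inr b) := by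
      apply Multiset.card_pos_iff_exists_mem.1
      simp only [Multiset.card_erase_of_mem hb, Nat.pred_eq_sub_one, hcard]
      omega
    obtain ⟨z₁, rfl⟩ : ∃ z₁, z = Sum.inr z₁ := by
      rcases z with z₁ | z₂
      · exact absurd ⟨z₁, Multiset.mem_of_mem_erase hz⟩ hA
      · exact ⟨z₂, rfl⟩
    have hdom₁ : MDominates (joinGraph G₁ G₂) D₁ :=
      mixed_dom ⟨a₀, Multiset.mem_cons_self _ _⟩ ⟨z₁, Multiset.mem_cons_of_mem hz⟩
    have s1 : TSStep (joinGraph G₁ G₂) D D₁ := mkStep (adj_rl b a₀) hb hdom hdom₁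
    obtain ⟨t, ht⟩ : ∃ t, t ∈ (D.erase (Sum.inr b)).erase (Sum.inr z₁) := by
      apply Multiset.card_pos_iff_exists_mem.1
      simp only [Multiset.card_erase_of_mem hz, Multiset.card_erase_of_mem hb,
        Nat.pred_eq_sub_one, hcard]
      omega
    obtain ⟨z₂, rfl⟩ : ∃ z₂, t = Sum.inr z₂ := by
      rcases t with z₂ | z₃
      · exact absurd ⟨z₂, Multiset.mem_of_mem_erase (Multiset.mem_of_mem_erase ht)⟩ hA
      · exact ⟨z₃, rfl⟩
    have hz₂ : Sum.inr z₂ ∈ D₁.erase (Sum.inr z₁) := by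
      rw [hD₁, Multiset.erase_cons_tail _ Sum.inl_ne_inr]
      exact Multiset.mem_cons_of_mem ht
    obtain ⟨E, hE, hEc, h1', h2'⟩ := case_two_r G₁ G₂ a₀ b₀ hdom₁
      (Multiset.mem_cons_of_mem hz) hz₂ (Multiset.mem_cons_self _ _)
    refine ⟨E, (Relation.ReflTransGen.single s1).trans hE, ?_, h1', h2'⟩
    rw [hEc, hD₁, card_move _ hb, hcard]

end Main

theorem join_reconf_of_three_tokens
    {V₁ V₂ : Type*} [DecidableEq V₁] [DecidableEq V₂] [Nonempty V₁] [Nonempty V₂]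
    (G₁ : SimpleGraph V₁) (G₂ : SimpleGraph V₂) (k : ℕ) (hk : 3 ≤ k)
    (Ds Dt : Multiset (V₁ ⊕ V₂))
    (hDs : MDominates (joinGraph G₁ G₂) Ds) (hDt : MDominates (joinGraph G₁ G₂) Dt)
    (hcs : Multiset.card Ds = k) (hct : Multiset.card Dt = k) :
    Relation.ReflTransGen (TSStep (joinGraph G₁ G₂)) Ds Dt := by
  obtain ⟨a₀⟩ := ‹Nonempty V₁›
  obtain ⟨b₀⟩ := ‹Nonempty V₂›
  have reach : ∀ D : Multiset (V₁ ⊕ V₂), MDominates (joinGraph G₁ G₂) D →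
      Multiset.card D = k →
      Relation.ReflTransGen (TSStep (joinGraph G₁ G₂)) D
        (Sum.inr b₀ ::ₘ Multiset.replicate (k - 1) (Sum.inl a₀)) := by
    intro D hdom hcard
    obtain ⟨E, hDE, hEc, hEa, hEb⟩ := to_good G₁ G₂ a₀ b₀ k hk D hdom hcard
    exact hDE.trans (good_to_C G₁ G₂ a₀ b₀ k hk _ E hEc hEa hEb le_rfl)
  exact (reach Ds hDs hcs).trans
    ((haveI : Std.Symm (TSStep (joinGraph G₁ G₂)) := ⟨fun _ _ h => TSStep.symm' h⟩
      Relation.ReflTransGen.symmetric.symm _ _)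
      (reach Dt hDt hct))
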